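/- If U is a free ultrafilter on ℕ which is Σ¹₂, i.e. there is a coanalytic set C ⊆ (ℕ → ℕ) × 2^ℕ with U = {x : ∃ w, (w,x) ∈ C}, then the Fubini product U ⊗ U = {y ⊆ ℕ × ℕ : {n : {m : (n,m) ∈ y} ∈ U} ∈ U} is an ultrafilter on ℕ × ℕ which has a coanalytic base X ⊆ 2^(ℕ×ℕ). -/

import Mathlib

/-- Identify `x : ℕ → Bool` with the subset `{n | x n = true}` of `ℕ`. -/
def toSet (x : ℕ → Bool) : Set ℕ := {n | x n = true}

/-- Identify `x : ℕ × ℕ → Bool` with the subset `{p | x p = true}` of `ℕ × ℕ`. -/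
def toSet2 (x : ℕ × ℕ → Bool) : Set (ℕ × ℕ) := {p | x p = true}

/-- A free ultrafilter is one containing all cofinite sets. -/
def IsFree (U : Ultrafilter ℕ) : Prop := ∀ s : Set ℕ, s.Finite → sᶜ ∈ U

open scoped Classical

namespace FubiniAux

open MeasureTheory Set

/-! ### Generic measurability lemmas -/

variable {α : Type*} [MeasurableSpace α]

lemma measSet_infinite (p : α → ℕ → Prop) (hp : ∀ n, MeasurableSet {x | p x n}) :
    MeasurableSet {x | {n | p x n}.Infinite} := by
  have : {x | {n | p x n}.Infinite} = ⋂ N, ⋃ n, ⋃ _ : N < n, {x | p x n} := by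
    ext x
    simp only [Set.mem_setOf_eq, Set.mem_iInter, Set.mem_iUnion]
    constructor
    · intro h N
      rcases h.exists_gt N with ⟨n, hn, hNn⟩
      exact ⟨n, hNn, hn⟩
    · intro h
      apply Set.infinite_of_not_bddAbove
      rintro ⟨b, hb⟩
      rcases h b with ⟨n, hbn, hn⟩
      exact absurd (hb hn) (by omega)
  rw [this]
  exact MeasurableSet.iInter fun N => MeasurableSet.iUnion fun n =>
    MeasurableSet.iUnion fun _ => hp n

lemma meas_count (p : α → ℕ → Prop) (hp : ∀ n, MeasurableSet {x | p x n}) (N : ℕ) :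
    Measurable fun x => Nat.count (p x) N := by
  induction N with
  | zero => simp only [Nat.count_zero]; exact measurable_const
  | succ N ih =>
      have : (fun x => Nat.count (p x) (N + 1))
          = fun x => Nat.count (p x) N + if p x N then 1 else 0 := by
        funext x; rw [Nat.count_succ]
      rw [this]
      exact ih.add (Measurable.ite (hp N) measurable_const measurable_const)

lemma measSet_few (p : α → ℕ → Prop) (hp : ∀ n, MeasurableSet {x | p x n}) (i : ℕ) :
    MeasurableSet {x | {n | p x n}.Finite ∧ {n | p x n}.ncard ≤ i} := by
  have : {x | {n | p x n}.Finite ∧ {n | p x n}.ncard ≤ i}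
      = (⋃ (s : Finset ℕ) (_ : s.card = i + 1), ⋂ j ∈ s, {x | p x j})ᶜ := by
    ext x
    simp only [Set.mem_setOf_eq, Set.mem_compl_iff, Set.mem_iUnion, Set.mem_iInter, not_exists]
    constructor
    · rintro ⟨hfin, hcard⟩ s hs hmem
      have hsub : ↑s ⊆ {n | p x n} := fun j hj => hmem j hj
      have : s.card ≤ {n | p x n}.ncard := by
        rw [Set.ncard_eq_toFinset_card _ hfin]
        exact Finset.card_le_card fun j hj => hfin.mem_toFinset.2 (hsub hj)
      omega
    · intro h
      by_contra hc
      rw [not_and_or] at hc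
      have hbig : ∃ s : Finset ℕ, ↑s ⊆ {n | p x n} ∧ s.card = i + 1 := by
        rcases hc with hinf | hcard
        · exact Set.Infinite.exists_subset_card_eq hinf (i + 1)
        · push_neg at hcard
          obtain ⟨t, hts, htcard⟩ :=
            Set.exists_subset_card_eq (show i + 1 ≤ {n | p x n}.ncard from hcard)
          by_cases hft : t.Finite
          · refine ⟨hft.toFinset, by simpa using hts, ?_⟩
            rwa [← Set.ncard_eq_toFinset_card _ hft]
          · obtain ⟨s, hs, hsc⟩ := Set.Infinite.exists_subset_card_eq hft (i + 1)
            exact ⟨s, fun j hj => hts (hs hj), hsc⟩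
      obtain ⟨s, hs1, hs2⟩ := hbig
      exact h s hs2 fun j hj => hs1 hj
  rw [this]
  exact (MeasurableSet.iUnion fun s => MeasurableSet.iUnion fun _ =>
    MeasurableSet.biInter s.countable_toSet fun j _ => hp j).compl

lemma nth_eq_iff' (p : ℕ → Prop) (i n : ℕ) :
    Nat.nth p i = n ↔ ((p n ∧ Nat.count p n = i) ∨
      (n = 0 ∧ (setOf p).Finite ∧ (setOf p).ncard ≤ i)) := by
  by_cases hfew : (setOf p).Finite ∧ (setOf p).ncard ≤ i
  · obtain ⟨hf, hle⟩ := hfew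
    have h0 : Nat.nth p i = 0 := by
      have hf' : (Set.ofPred p).Finite := hf
      apply Nat.nth_of_card_le hf'
      rwa [← Set.ncard_eq_toFinset_card _ hf']
    constructor
    · intro h
      right
      exact ⟨by omega, hf, hle⟩
    · rintro (⟨hpn, hcount⟩ | ⟨rfl, _⟩)
      · exfalso
        have : Nat.count p n < hf.toFinset.card := Nat.count_lt_card hf hpn
        rw [← Set.ncard_eq_toFinset_card _ hf] at this
        omega
      · exact h0
  · have hcard : ∀ hf : (setOf p).Finite, i < hf.toFinset.card := by
      intro hf
      rw [← Set.ncard_eq_toFinset_card _ hf]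
      by_contra hcon
      exact hfew ⟨hf, by omega⟩
    constructor
    · rintro rfl
      exact Or.inl ⟨Nat.nth_mem i hcard, Nat.count_nth hcard⟩
    · rintro (⟨hpn, rfl⟩ | ⟨rfl, hf, hle⟩)
      · exact Nat.nth_count hpn
      · exact absurd ⟨hf, hle⟩ hfew

lemma meas_nth (p : α → ℕ → Prop) (hp : ∀ n, MeasurableSet {x | p x n}) (i : ℕ) :
    Measurable fun x => Nat.nth (p x) i := by
  apply measurable_to_countable'
  intro n
  have : (fun x => Nat.nth (p x) i) ⁻¹' {n}
      = ({x | p x n} ∩ ((fun x => Nat.count (p x) n) ⁻¹' {i}))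
        ∪ (⋃ _ : n = 0, {x | {m | p x m}.Finite ∧ {m | p x m}.ncard ≤ i}) := by
    ext x
    simp only [Set.mem_preimage, Set.mem_singleton_iff, Set.mem_union, Set.mem_inter_iff,
      Set.mem_setOf_eq, Set.mem_iUnion]
    rw [nth_eq_iff']
    constructor
    · rintro (⟨h1, h2⟩ | ⟨h1, h2⟩)
      · exact Or.inl ⟨h1, h2⟩
      · exact Or.inr ⟨h1, h2⟩
    · rintro (⟨h1, h2⟩ | ⟨h1, h2⟩)
      · exact Or.inl ⟨h1, h2⟩
      · exact Or.inr ⟨h1, h2⟩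
  rw [this]
  exact ((hp n).inter ((meas_count p hp n) (measurableSet_singleton i))).union
    (MeasurableSet.iUnion fun _ => measSet_few p hp i)

lemma meas_comp_nat {β : Type*} [MeasurableSpace β] {f : α → ℕ} (hf : Measurable f)
    {g : α → ℕ → β} (hg : ∀ n, Measurable fun x => g x n) [Countable β]
    [MeasurableSingletonClass β] :
    Measurable fun x => g x (f x) := by
  apply measurable_to_countable'
  intro b
  have : (fun x => g x (f x)) ⁻¹' {b} = ⋃ n, (f ⁻¹' {n}) ∩ ((fun x => g x n) ⁻¹' {b}) := by
    ext x
    simp only [Set.mem_preimage, Set.mem_singleton_iff, Set.mem_iUnion, Set.mem_inter_iff]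
    constructor
    · intro h; exact ⟨f x, rfl, h⟩
    · rintro ⟨n, hn, h⟩; rw [hn]; exact h
  rw [this]
  exact MeasurableSet.iUnion fun n =>
    (hf (measurableSet_singleton n)).inter ((hg n) (measurableSet_singleton b))

/-! ### The coding apparatus -/

/-- The `n`-th column of `x`. -/
def col (x : ℕ × ℕ → Bool) (n : ℕ) : Set ℕ := {m | x (n, m) = true}

/-- Columns which are infinite. -/
def pInf (x : ℕ × ℕ → Bool) (n : ℕ) : Prop := (col x n).Infinite

/-- Columns which are finite and nonempty (the coding columns). -/
def pFin (x : ℕ × ℕ → Bool) (n : ℕ) : Prop := (col x n).Finite ∧ (col x n).Nonempty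

noncomputable def aIdx (x : ℕ × ℕ → Bool) (j : ℕ) : ℕ := Nat.nth (pInf x) j

noncomputable def kIdx (x : ℕ × ℕ → Bool) (i : ℕ) : ℕ := Nat.nth (pFin x) i

/-- The decoded natural number sequence: sizes (minus one) of the coding columns. -/
noncomputable def zDec (x : ℕ × ℕ → Bool) (i : ℕ) : ℕ := (col x (kIdx x i)).ncard - 1

noncomputable def wAx (x : ℕ × ℕ → Bool) : ℕ → ℕ := fun d => zDec x (Nat.pair 0 d)

noncomputable def wSx (x : ℕ × ℕ → Bool) (j : ℕ) : ℕ → ℕ :=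
  fun d => zDec x (Nat.pair (j + 1) d)


noncomputable def chiA (x : ℕ × ℕ → Bool) : ℕ → Bool := fun n => decide (pInf x n)

def colFun (x : ℕ × ℕ → Bool) (n : ℕ) : ℕ → Bool := fun m => x (n, m)

/-- Structural condition: infinitely many infinite columns and infinitely many coding columns. -/
def Str : Set (ℕ × ℕ → Bool) := {x | {n | pInf x n}.Infinite ∧ {n | pFin x n}.Infinite}

/-- The coanalytic base. -/
def XX (C : Set ((ℕ → ℕ) × (ℕ → Bool))) : Set (ℕ × ℕ → Bool) :=
  {x | x ∈ Str ∧ (wAx x, chiA x) ∈ C ∧ ∀ j, (wSx x j, colFun x (aIdx x j)) ∈ C}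

/-! ### Measurability of the coding apparatus -/

lemma meas_mem_col (n m : ℕ) : MeasurableSet {x : ℕ × ℕ → Bool | m ∈ col x n} := by
  have : {x : ℕ × ℕ → Bool | m ∈ col x n} = (fun x : ℕ × ℕ → Bool => x (n, m)) ⁻¹' {true} := by
    ext x; simp [col]
  rw [this]
  exact measurable_pi_apply (n, m) (measurableSet_singleton true)

lemma meas_col_finite (n : ℕ) : MeasurableSet {x : ℕ × ℕ → Bool | (col x n).Finite} := by
  have : {x : ℕ × ℕ → Bool | (col x n).Finite}
      = ⋃ s : Finset ℕ, ⋂ m, {x : ℕ × ℕ → Bool | m ∈ col x n → m ∈ s} := by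
    ext x
    simp only [Set.mem_setOf_eq, Set.mem_iUnion, Set.mem_iInter]
    constructor
    · intro hf
      exact ⟨hf.toFinset, fun m hm => hf.mem_toFinset.2 hm⟩
    · rintro ⟨s, hs⟩
      exact s.finite_toSet.subset fun m hm => hs m hm
  rw [this]
  refine MeasurableSet.iUnion fun s => MeasurableSet.iInter fun m => ?_
  by_cases hm : m ∈ s
  · have : {x : ℕ × ℕ → Bool | m ∈ col x n → m ∈ s} = Set.univ := by
      ext x; simp [hm]
    rw [this]; exact MeasurableSet.univ
  · have : {x : ℕ × ℕ → Bool | m ∈ col x n → m ∈ s} = {x | m ∈ col x n}ᶜ := by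
      ext x; simp [hm]
    rw [this]; exact (meas_mem_col n m).compl

lemma meas_pInf (n : ℕ) : MeasurableSet {x : ℕ × ℕ → Bool | pInf x n} := by
  have : {x : ℕ × ℕ → Bool | pInf x n} = {x : ℕ × ℕ → Bool | (col x n).Finite}ᶜ := by
    ext x
    simp only [Set.mem_compl_iff, Set.mem_setOf_eq]
    exact Iff.rfl
  rw [this]
  exact (meas_col_finite n).compl

lemma meas_pFin (n : ℕ) : MeasurableSet {x : ℕ × ℕ → Bool | pFin x n} := by
  have : {x : ℕ × ℕ → Bool | pFin x n}
      = {x : ℕ × ℕ → Bool | (col x n).Finite} ∩ ⋃ m, {x | m ∈ col x n} := by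
    ext x
    simp only [pFin, Set.mem_setOf_eq, Set.mem_inter_iff, Set.mem_iUnion]
    exact and_congr_right fun _ => Iff.rfl
  rw [this]
  exact (meas_col_finite n).inter (MeasurableSet.iUnion fun m => meas_mem_col n m)

lemma meas_ncard_col (n : ℕ) : Measurable fun x : ℕ × ℕ → Bool => (col x n).ncard := by
  apply measurable_to_countable'
  intro v
  have : (fun x : ℕ × ℕ → Bool => (col x n).ncard) ⁻¹' {v}
      = (⋃ (s : Finset ℕ) (_ : s.card = v), ⋂ m, {x : ℕ × ℕ → Bool | m ∈ col x n ↔ m ∈ s})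
        ∪ ⋃ _ : v = 0, {x : ℕ × ℕ → Bool | (col x n).Finite}ᶜ := by
    ext x
    simp only [Set.mem_preimage, Set.mem_singleton_iff, Set.mem_union, Set.mem_iUnion,
      Set.mem_iInter, Set.mem_setOf_eq, Set.mem_compl_iff]
    constructor
    · intro h
      by_cases hf : (col x n).Finite
      · left
        refine ⟨hf.toFinset, ?_, fun m => by simp [hf.mem_toFinset]⟩
        rw [← Set.ncard_eq_toFinset_card _ hf, h]
      · right
        refine ⟨?_, hf⟩
        rw [← h, Set.Infinite.ncard hf]
    · rintro (⟨s, hcard, hs⟩ | ⟨rfl, hf⟩)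
      · have : col x n = ↑s := Set.ext fun m => (hs m)
        rw [this, Set.ncard_coe_finset, hcard]
      · exact Set.Infinite.ncard hf
  rw [this]
  refine MeasurableSet.union ?_ (MeasurableSet.iUnion fun _ => (meas_col_finite n).compl)
  refine MeasurableSet.iUnion fun s => MeasurableSet.iUnion fun _ =>
    MeasurableSet.iInter fun m => ?_
  by_cases hm : m ∈ s
  · have : {x : ℕ × ℕ → Bool | m ∈ col x n ↔ m ∈ s} = {x | m ∈ col x n} := by
      ext x; simp [hm]
    rw [this]; exact meas_mem_col n m
  · have : {x : ℕ × ℕ → Bool | m ∈ col x n ↔ m ∈ s} = {x | m ∈ col x n}ᶜ := by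
      ext x; simp [hm]
    rw [this]; exact (meas_mem_col n m).compl

lemma meas_kIdx (i : ℕ) : Measurable fun x : ℕ × ℕ → Bool => kIdx x i :=
  meas_nth (fun x n => pFin x n) meas_pFin i

lemma meas_aIdx (j : ℕ) : Measurable fun x : ℕ × ℕ → Bool => aIdx x j :=
  meas_nth (fun x n => pInf x n) meas_pInf j

lemma meas_zDec (i : ℕ) : Measurable fun x : ℕ × ℕ → Bool => zDec x i := by
  have h1 : Measurable fun x : ℕ × ℕ → Bool => (col x (kIdx x i)).ncard :=
    meas_comp_nat (meas_kIdx i) meas_ncard_col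
  have h2 : Measurable fun v : ℕ => v - 1 := measurable_from_top
  exact h2.comp h1

lemma meas_wAx : Measurable wAx := by
  rw [show wAx = fun x d => zDec x (Nat.pair 0 d) from rfl]
  exact measurable_pi_iff.2 fun d => meas_zDec _

lemma meas_wSx (j : ℕ) : Measurable fun x => wSx x j :=
  measurable_pi_iff.2 fun _ => meas_zDec _

lemma meas_chiA : Measurable chiA := by
  refine measurable_pi_iff.2 fun n => measurable_to_countable' fun b => ?_
  cases b
  · have : (fun x => chiA x n) ⁻¹' {false} = {x : ℕ × ℕ → Bool | pInf x n}ᶜ := by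
      ext x; simp [chiA]
    rw [this]; exact (meas_pInf n).compl
  · have : (fun x => chiA x n) ⁻¹' {true} = {x : ℕ × ℕ → Bool | pInf x n} := by
      ext x; simp [chiA]
    rw [this]; exact meas_pInf n

lemma meas_colFun_aIdx (j : ℕ) : Measurable fun x => colFun x (aIdx x j) := by
  refine measurable_pi_iff.2 fun m => ?_
  have : (fun x => colFun x (aIdx x j) m) = fun x => (fun n => x (n, m)) (aIdx x j) := rfl
  rw [this]
  exact meas_comp_nat (β := Bool) (meas_aIdx j) fun n => measurable_pi_apply (n, m)

lemma meas_Str : MeasurableSet Str := by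
  exact (measSet_infinite (fun x n => pInf x n) meas_pInf).inter
    (measSet_infinite (fun x n => pFin x n) meas_pFin)

/-! ### Analyticity -/

instance : PolishSpace (ℕ × ℕ → Bool) := { }

lemma analyticSet_union {β : Type*} [TopologicalSpace β] {s t : Set β}
    (hs : AnalyticSet s) (ht : AnalyticSet t) : AnalyticSet (s ∪ t) := by
  rw [Set.union_eq_iUnion]
  exact AnalyticSet.iUnion fun b => by cases b <;> simpa

lemma analytic_inter_preimage {F : (ℕ × ℕ → Bool) → (ℕ → ℕ) × (ℕ → Bool)}
    (hF : Measurable F) {S : Set (ℕ × ℕ → Bool)} (hS : MeasurableSet S)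
    {D : Set ((ℕ → ℕ) × (ℕ → Bool))} (hD : AnalyticSet D) :
    AnalyticSet (S ∩ F ⁻¹' D) := by
  rw [MeasureTheory.AnalyticSet] at hD
  rcases hD with hD | ⟨f, hfc, hfr⟩
  · rw [hD]
    simpa using analyticSet_empty
  · have heq : S ∩ F ⁻¹' (Set.range f)
        = Prod.snd '' {q : (ℕ → ℕ) × (ℕ × ℕ → Bool) | q.2 ∈ S ∧ f q.1 = F q.2} := by
      ext x
      simp only [Set.mem_inter_iff, Set.mem_preimage, Set.mem_range, Set.mem_image,
        Set.mem_setOf_eq, Prod.exists]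
      constructor
      · rintro ⟨hxS, v, hv⟩
        exact ⟨v, x, ⟨hxS, hv⟩, rfl⟩
      · rintro ⟨v, y, ⟨hyS, hv⟩, rfl⟩
        exact ⟨hyS, v, hv⟩
    rw [← hfr, heq]
    have hmeas : MeasurableSet {q : (ℕ → ℕ) × (ℕ × ℕ → Bool) | q.2 ∈ S ∧ f q.1 = F q.2} := by
      have h1 : MeasurableSet {q : (ℕ → ℕ) × (ℕ × ℕ → Bool) | q.2 ∈ S} :=
        hS.preimage measurable_snd
      have h2 : MeasurableSet {q : (ℕ → ℕ) × (ℕ × ℕ → Bool) | f q.1 = F q.2} := by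
        have hmap : Measurable fun q : (ℕ → ℕ) × (ℕ × ℕ → Bool) => (f q.1, F q.2) :=
          (hfc.measurable.comp measurable_fst).prodMk (hF.comp measurable_snd)
        have hdiag : MeasurableSet (Set.diagonal ((ℕ → ℕ) × (ℕ → Bool))) :=
          (isClosed_diagonal).measurableSet
        have hpre := hmap hdiag
        have heq2 : {q : (ℕ → ℕ) × (ℕ × ℕ → Bool) | f q.1 = F q.2}
            = (fun q : (ℕ → ℕ) × (ℕ × ℕ → Bool) => (f q.1, F q.2)) ⁻¹'
              (Set.diagonal ((ℕ → ℕ) × (ℕ → Bool))) := by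
          ext q
          simp only [Set.mem_setOf_eq, Set.mem_preimage, Set.mem_diagonal_iff]
        rw [heq2]
        exact hpre
      exact h1.inter h2
    exact MeasureTheory.AnalyticSet.image_of_continuous (MeasurableSet.analyticSet hmeas)
      continuous_snd

lemma XX_compl_analytic (C : Set ((ℕ → ℕ) × (ℕ → Bool))) (hC : AnalyticSet Cᶜ) :
    AnalyticSet (XX C)ᶜ := by
  have heq : (XX C)ᶜ = Strᶜ ∪ ((Str ∩ (fun x => (wAx x, chiA x)) ⁻¹' Cᶜ)
      ∪ ⋃ j, Str ∩ (fun x => (wSx x j, colFun x (aIdx x j))) ⁻¹' Cᶜ) := by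
    ext x
    simp only [XX, Set.mem_compl_iff, Set.mem_setOf_eq, Set.mem_union, Set.mem_inter_iff,
      Set.mem_preimage, Set.mem_iUnion, not_and, not_forall]
    by_cases hx : x ∈ Str
    · simp only [hx, true_implies, true_and, not_true_eq_false, false_or]
      tauto
    · simp [hx]
  rw [heq]
  refine analyticSet_union (meas_Str.compl.analyticSet) (analyticSet_union ?_ ?_)
  · exact analytic_inter_preimage (meas_wAx.prodMk meas_chiA) meas_Str hC
  · exact AnalyticSet.iUnion fun j =>
      analytic_inter_preimage ((meas_wSx j).prodMk (meas_colFun_aIdx j)) meas_Str hC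

/-! ### The Fubini product -/

def fub (U : Ultrafilter ℕ) : Filter (ℕ × ℕ) where
  sets := {y | {n | {m | (n, m) ∈ y} ∈ U} ∈ U}
  univ_sets := by
    show {n : ℕ | {m : ℕ | (n, m) ∈ (Set.univ : Set (ℕ × ℕ))} ∈ U} ∈ U
    have h1 : ∀ n : ℕ, {m : ℕ | (n, m) ∈ (Set.univ : Set (ℕ × ℕ))} = Set.univ :=
      fun n => rfl
    simp only [h1]
    have h2 : {n : ℕ | (Set.univ : Set ℕ) ∈ U} = Set.univ := by
      ext n
      simp only [Set.mem_setOf_eq, Set.mem_univ, iff_true]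
      exact Filter.univ_mem
    rw [h2]
    exact Filter.univ_mem
  sets_of_superset := by
    intro y z hy hyz
    refine Filter.mem_of_superset hy fun n hn => ?_
    exact Filter.mem_of_superset hn fun m hm => hyz hm
  inter_sets := by
    intro y z hy hz
    refine Filter.mem_of_superset (Filter.inter_mem hy hz) ?_
    rintro n ⟨hn1, hn2⟩
    exact Filter.inter_mem hn1 hn2

lemma mem_fub {U : Ultrafilter ℕ} {y : Set (ℕ × ℕ)} :
    y ∈ fub U ↔ {n | {m | (n, m) ∈ y} ∈ U} ∈ U := Iff.rfl

noncomputable def fubU (U : Ultrafilter ℕ) : Ultrafilter (ℕ × ℕ) :=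
  Ultrafilter.ofComplNotMemIff (fub U) (by
    intro s
    rw [mem_fub, mem_fub]
    have h1 : ∀ n, {m | (n, m) ∈ sᶜ} = {m | (n, m) ∈ s}ᶜ := fun n => rfl
    constructor
    · intro h
      by_contra hc
      have : {n | {m | (n, m) ∈ s} ∈ U}ᶜ ∈ U := Ultrafilter.compl_mem_iff_notMem.2 hc
      apply h
      refine Filter.mem_of_superset this fun n hn => ?_
      rw [Set.mem_setOf_eq, h1 n]
      exact Ultrafilter.compl_mem_iff_notMem.2 hn
    · intro h hc
      have hinter := Filter.inter_mem h hc
      have : (∅ : Set ℕ) ∈ U := by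
        refine Filter.mem_of_superset hinter ?_
        rintro n ⟨hn1, hn2⟩
        rw [Set.mem_setOf_eq, h1 n] at hn2
        have := Filter.inter_mem hn1 hn2
        rw [Set.inter_compl_self] at this
        exact absurd this (Filter.empty_notMem _)
      exact absurd this (Filter.empty_notMem _))

lemma mem_fubU {U : Ultrafilter ℕ} {y : Set (ℕ × ℕ)} :
    y ∈ fubU U ↔ {n | {m | (n, m) ∈ y} ∈ U} ∈ U := Iff.rfl

/-! ### Combinatorial lemmas -/

lemma infinite_of_mem {U : Ultrafilter ℕ} (hfree : IsFree U) {s : Set ℕ} (hs : s ∈ U) :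
    s.Infinite := by
  by_contra h
  rw [Set.not_infinite] at h
  have := Filter.inter_mem hs (hfree s h)
  rw [Set.inter_compl_self] at this
  exact absurd this (Filter.empty_notMem _)

lemma exists_split {U : Ultrafilter ℕ} (hfree : IsFree U) {S : Set ℕ} (hS : S ∈ U) :
    ∃ A K : Set ℕ, A ∈ U ∧ K.Infinite ∧ A ⊆ S ∧ K ⊆ S ∧ ∀ n, n ∈ A → n ∈ K → False := by
  have hSinf : S.Infinite := infinite_of_mem hfree hS
  set p : ℕ → Prop := fun n => n ∈ S with hp
  have hpinf : (setOf p).Infinite := hSinf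
  set E : Set ℕ := {n | n ∈ S ∧ Even (Nat.count p n)} with hE
  have hEmem : ∀ i, Nat.nth p (2 * i) ∈ E := by
    intro i
    refine ⟨Nat.nth_mem_of_infinite hpinf _, ?_⟩
    rw [Nat.count_nth_of_infinite hpinf]
    exact even_two_mul i
  have hOmem : ∀ i, Nat.nth p (2 * i + 1) ∈ S \ E := by
    intro i
    refine ⟨Nat.nth_mem_of_infinite hpinf _, ?_⟩
    rintro ⟨-, hev⟩
    rw [Nat.count_nth_of_infinite hpinf, Nat.even_add_one] at hev
    exact hev (even_two_mul i)
  have hEinf : E.Infinite := by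
    refine Set.infinite_of_injective_forall_mem
      (f := fun i => Nat.nth p (2 * i)) ?_ hEmem
    intro a b hab
    have := Nat.nth_injective hpinf hab
    omega
  have hOinf : (S \ E).Infinite := by
    refine Set.infinite_of_injective_forall_mem
      (f := fun i => Nat.nth p (2 * i + 1)) ?_ hOmem
    intro a b hab
    have := Nat.nth_injective hpinf hab
    omega
  rcases U.mem_or_compl_mem E with hEU | hEc
  · exact ⟨E, S \ E, hEU, hOinf, fun n hn => hn.1, Set.diff_subset,
      fun n hnE hnO => hnO.2 hnE⟩
  · refine ⟨S \ E, E, ?_, hEinf, Set.diff_subset, fun n hn => hn.1,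
      fun n hnO hnE => hnO.2 hnE⟩
    rw [Set.diff_eq]
    exact Filter.inter_mem hS hEc

end FubiniAux

open FubiniAux MeasureTheory in
/-- If `U` is a free `Σ¹₂` ultrafilter on `ℕ` (i.e. the projection of a coanalytic
subset of `(ℕ → ℕ) × 2^ℕ`), then the Fubini product `U ⊗ U` is an ultrafilter on
`ℕ × ℕ` which has a coanalytic base. -/
theorem fubini_product_coanalytic_base (U : Ultrafilter ℕ) (hfree : IsFree U)
    (C : Set ((ℕ → ℕ) × (ℕ → Bool))) (hC : MeasureTheory.AnalyticSet Cᶜ)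
    (hU : ∀ x : ℕ → Bool, toSet x ∈ U ↔ ∃ w : ℕ → ℕ, (w, x) ∈ C) :
    ∃ V : Ultrafilter (ℕ × ℕ),
      (∀ y : Set (ℕ × ℕ), y ∈ V ↔ {n : ℕ | {m : ℕ | (n, m) ∈ y} ∈ U} ∈ U) ∧
      ∃ X : Set (ℕ × ℕ → Bool), MeasureTheory.AnalyticSet Xᶜ ∧
        (∀ x ∈ X, toSet2 x ∈ V) ∧ (∀ u ∈ V, ∃ x ∈ X, toSet2 x ⊆ u) := by
  refine ⟨fubU U, fun y => mem_fubU, XX C, XX_compl_analytic C hC, ?_, ?_⟩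
  · -- every member of `XX C` is in the Fubini product
    rintro x ⟨⟨hStrInf, _⟩, hwA, hwS⟩
    rw [mem_fubU]
    have hA : toSet (chiA x) ∈ U := (hU (chiA x)).2 ⟨wAx x, hwA⟩
    have hA' : {n | pInf x n} ∈ U := by
      have : toSet (chiA x) = {n | pInf x n} := by
        ext n; simp [toSet, chiA]
      rwa [this] at hA
    refine Filter.mem_of_superset hA' fun n hn => ?_
    have hj : aIdx x (Nat.count (pInf x) n) = n := Nat.nth_count hn
    have := hwS (Nat.count (pInf x) n)
    rw [hj] at this
    have hcol : toSet (colFun x n) ∈ U := (hU (colFun x n)).2 ⟨_, this⟩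
    have : toSet (colFun x n) = {m | (n, m) ∈ toSet2 x} := rfl
    rwa [this] at hcol
  · -- base property
    intro u hu
    rw [mem_fubU] at hu
    set usl : ℕ → Set ℕ := fun n => {m | (n, m) ∈ u} with husl
    obtain ⟨A, K, hAU, hKinf, hAS, hKS, hdisj⟩ := exists_split hfree hu
    have hAinf : A.Infinite := infinite_of_mem hfree hAU
    have hsetA : setOf (fun n => n ∈ A) = A := rfl
    have hsetK : setOf (fun n => n ∈ K) = K := rfl
    set a : ℕ → ℕ := fun j => Nat.nth (fun n => n ∈ A) j with ha
    set k : ℕ → ℕ := fun i => Nat.nth (fun n => n ∈ K) i with hk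
    have haA : ∀ j, a j ∈ A := fun j => Nat.nth_mem_of_infinite hAinf j
    have hkK : ∀ i, k i ∈ K := fun i => Nat.nth_mem_of_infinite hKinf i
    have huslInf : ∀ n, n ∈ A ∨ n ∈ K → (usl n).Infinite := by
      rintro n (hn | hn)
      · exact infinite_of_mem hfree (hAS hn)
      · exact infinite_of_mem hfree (hKS hn)
    -- witnesses
    have hchiAeq : toSet (fun n => decide (n ∈ A)) = A := by
      ext n; simp [toSet]
    obtain ⟨wA', hwA'⟩ := (hU (fun n => decide (n ∈ A))).1 (by rw [hchiAeq]; exact hAU)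
    have hcolw : ∀ j, toSet (fun m => decide ((a j, m) ∈ u)) ∈ U := by
      intro j
      have : toSet (fun m => decide ((a j, m) ∈ u)) = usl (a j) := by
        ext m; simp [toSet, husl]
      rw [this]
      exact hAS (haA j)
    choose wS' hwS' using fun j => (hU _).1 (hcolw j)
    -- the code
    set z : ℕ → ℕ := fun i =>
      if (Nat.unpair i).1 = 0 then wA' (Nat.unpair i).2
      else wS' ((Nat.unpair i).1 - 1) (Nat.unpair i).2 with hz
    set Q : ℕ → Set ℕ := fun n =>
      Nat.nth (fun m => m ∈ usl n) '' Set.Iio (z (Nat.count (fun n' => n' ∈ K) n) + 1) with hQ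
    set x : ℕ × ℕ → Bool := fun p =>
      decide ((p.1 ∈ A ∧ p.2 ∈ usl p.1) ∨ (p.1 ∈ K ∧ p.2 ∈ Q p.1)) with hx
    -- column computations
    have hcolA : ∀ n, n ∈ A → col x n = usl n := by
      intro n hn
      ext m
      simp only [col, hx, Set.mem_setOf_eq, decide_eq_true_eq]
      constructor
      · rintro (⟨-, h⟩ | ⟨hK, -⟩)
        · exact h
        · exact absurd hK (fun hK => hdisj n hn hK)
      · intro h; exact Or.inl ⟨hn, h⟩
    have hcolK : ∀ n, n ∈ K → col x n = Q n := by
      intro n hn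
      ext m
      simp only [col, hx, Set.mem_setOf_eq, decide_eq_true_eq]
      constructor
      · rintro (⟨hA', -⟩ | ⟨-, h⟩)
        · exact absurd hA' (fun hA' => hdisj n hA' hn)
        · exact h
      · intro h; exact Or.inr ⟨hn, h⟩
    have hcolO : ∀ n, n ∉ A → n ∉ K → col x n = ∅ := by
      intro n hnA hnK
      ext m
      simp only [col, hx, Set.mem_setOf_eq, decide_eq_true_eq, Set.mem_empty_iff_false,
        iff_false]
      rintro (⟨h, -⟩ | ⟨h, -⟩)
      · exact hnA h
      · exact hnK h
    have hQfin : ∀ n, (Q n).Finite := fun n => (Set.finite_Iio _).image _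
    have hQsub : ∀ n, n ∈ K → Q n ⊆ usl n := by
      intro n hn m hm
      obtain ⟨t, -, rfl⟩ := hm
      exact Nat.nth_mem_of_infinite (huslInf n (Or.inr hn)) t
    have hQne : ∀ n, (Q n).Nonempty := by
      intro n
      exact ⟨Nat.nth (fun m => m ∈ usl n) 0, ⟨0, by simp, rfl⟩⟩
    have hQcard : ∀ n, n ∈ K → (Q n).ncard = z (Nat.count (fun n' => n' ∈ K) n) + 1 := by
      intro n hn
      simp only [hQ]
      have hinj : Function.Injective (Nat.nth fun m => m ∈ usl n) :=
        Nat.nth_injective (by exact huslInf n (Or.inr hn))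
      rw [Set.ncard_image_of_injective _ hinj]
      rw [← Finset.coe_Iio, Set.ncard_coe_finset, Nat.card_Iio]
    -- pInf/pFin characterizations
    have hpInf_iff : ∀ n, pInf x n ↔ n ∈ A := by
      intro n
      by_cases hnA : n ∈ A
      · simp only [hnA, iff_true, pInf, hcolA n hnA]
        exact huslInf n (Or.inl hnA)
      · simp only [hnA, iff_false, pInf]
        by_cases hnK : n ∈ K
        · rw [hcolK n hnK, Set.not_infinite]
          exact hQfin n
        · rw [hcolO n hnA hnK, Set.not_infinite]
          exact Set.finite_empty
    have hpFin_iff : ∀ n, pFin x n ↔ n ∈ K := by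
      intro n
      by_cases hnK : n ∈ K
      · simp only [hnK, iff_true, pFin, hcolK n hnK]
        exact ⟨hQfin n, hQne n⟩
      · simp only [hnK, iff_false, pFin]
        by_cases hnA : n ∈ A
        · rw [hcolA n hnA]
          rintro ⟨hf, -⟩
          exact absurd hf (huslInf n (Or.inl hnA))
        · rw [hcolO n hnA hnK]
          rintro ⟨-, hne⟩
          exact Set.not_nonempty_empty hne
    have hpInf_eq : pInf x = fun n => n ∈ A := funext fun n => propext (hpInf_iff n)
    have hpFin_eq : pFin x = fun n => n ∈ K := funext fun n => propext (hpFin_iff n)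
    have hStr : x ∈ Str := by
      constructor
      · rw [show {n | pInf x n} = A from Set.ext hpInf_iff]
        exact hAinf
      · rw [show {n | pFin x n} = K from Set.ext hpFin_iff]
        exact hKinf
    have haIdx : ∀ j, aIdx x j = a j := by
      intro j; rw [aIdx, hpInf_eq]
    have hkIdx : ∀ i, kIdx x i = k i := by
      intro i; rw [kIdx, hpFin_eq]
    have hcountk : ∀ i, Nat.count (fun n => n ∈ K) (k i) = i := fun i =>
      Nat.count_nth_of_infinite (p := fun n => n ∈ K) hKinf i
    have hzDec : ∀ i, zDec x i = z i := by
      intro i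
      rw [zDec, hkIdx, hcolK _ (hkK i), hQcard _ (hkK i), hcountk]
      omega
    have hwAx_eq : wAx x = wA' := by
      funext d
      rw [wAx, hzDec, hz]
      simp [Nat.unpair_pair]
    have hchiA_eq : chiA x = fun n => decide (n ∈ A) := by
      funext n
      rw [chiA]
      exact decide_eq_decide.2 (hpInf_iff n)
    have hwSx_eq : ∀ j, wSx x j = wS' j := by
      intro j
      funext d
      rw [wSx, hzDec, hz]
      simp [Nat.unpair_pair]
    have hcolFun_eq : ∀ j, colFun x (aIdx x j) = fun m => decide ((a j, m) ∈ u) := by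
      intro j
      rw [haIdx]
      funext m
      rw [colFun, hx]
      apply decide_eq_decide.2
      constructor
      · rintro (⟨-, h⟩ | ⟨hK, -⟩)
        · exact h
        · exact absurd hK (fun hK => hdisj _ (haA j) hK)
      · intro h
        exact Or.inl ⟨haA j, h⟩
    refine ⟨x, ⟨hStr, ?_, ?_⟩, ?_⟩
    · rw [hwAx_eq, hchiA_eq]; exact hwA'
    · intro j
      rw [hwSx_eq, hcolFun_eq]
      exact hwS' j
    · rintro ⟨n, m⟩ hmem
      have : x (n, m) = true := hmem
      rw [hx] at this
      simp only [decide_eq_true_eq] at this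
      rcases this with ⟨-, h⟩ | ⟨hK, h⟩
      · exact h
      · exact hQsub n hK h
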